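/- If a continuously differentiable function V : [t0, ∞) → ℝ satisfies V(t) ≥ 0 and V'(t) ≤ -β·V(t) + ϖ·exp(-2α(t - t0)) for constants β > 0, α > 0, ϖ ≥ 0 with β ≠ 2α, then V(t) ≤ V(t0)·exp(-β(t - t0)) + (ϖ/|β - 2α|)·exp(-c(t - t0)) where c = min(2α, β). -/

import Mathlib

/-- Comparison lemma for a scalar differential inequality with an exponentially
decaying perturbation, used in the DMP stability analysis. -/
theorem stmt_1 (V : ℝ → ℝ) (t0 β α ϖ : ℝ)
    (hβ : 0 < β) (hα : 0 < α) (hϖ : 0 ≤ ϖ) (hne : β ≠ 2 * α)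
    (hC1 : ContDiff ℝ 1 V)
    (hpos : ∀ t, t0 ≤ t → 0 ≤ V t)
    (hineq : ∀ t, t0 ≤ t → deriv V t ≤ -β * V t + ϖ * Real.exp (-2 * α * (t - t0))) :
    ∀ t, t0 ≤ t →
      V t ≤ V t0 * Real.exp (-β * (t - t0)) +
        (ϖ / |β - 2 * α|) * Real.exp (-(min (2 * α) β) * (t - t0)) := by
  intro t ht
  have hVdiff : Differentiable ℝ V := hC1.differentiable one_ne_zero
  set k : ℝ := β - 2 * α with hk
  have hkne : k ≠ 0 := sub_ne_zero.mpr hne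
  set F : ℝ → ℝ := fun s =>
    V s * Real.exp (β * (s - t0)) - (ϖ / k) * Real.exp (k * (s - t0)) with hF
  have hFd : ∀ s : ℝ, HasDerivAt F
      (deriv V s * Real.exp (β * (s - t0)) + V s * (β * Real.exp (β * (s - t0)))
        - (ϖ / k) * (k * Real.exp (k * (s - t0)))) s := by
    intro s
    have h1 : HasDerivAt (fun u : ℝ => β * (u - t0)) β s := by
      simpa using ((hasDerivAt_id s).sub_const t0).const_mul β
    have h2 : HasDerivAt (fun u : ℝ => k * (u - t0)) k s := by
      simpa using ((hasDerivAt_id s).sub_const t0).const_mul k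
    have hE1 : HasDerivAt (fun u : ℝ => Real.exp (β * (u - t0)))
        (Real.exp (β * (s - t0)) * β) s := h1.exp
    have hE2 : HasDerivAt (fun u : ℝ => Real.exp (k * (u - t0)))
        (Real.exp (k * (s - t0)) * k) s := h2.exp
    have hV : HasDerivAt V (deriv V s) s := (hVdiff s).hasDerivAt
    have := (hV.mul hE1).sub (hE2.const_mul (ϖ / k))
    exact this.congr_deriv (by ring)
  have hanti : AntitoneOn F (Set.Ici t0) := by
    apply antitoneOn_of_deriv_nonpos (convex_Ici t0)
    · have hVc : Continuous V := hC1.continuous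
      exact ((hVc.mul (by continuity)).sub (by continuity)).continuousOn
    · intro s hs
      exact ((hFd s).differentiableAt).differentiableWithinAt
    · intro s hs
      rw [interior_Ici] at hs
      rw [(hFd s).deriv]
      have hs' : t0 ≤ s := le_of_lt hs
      have h1 := hineq s hs'
      have hdivk : (ϖ / k) * (k * Real.exp (k * (s - t0))) = ϖ * Real.exp (k * (s - t0)) := by
        field_simp
      rw [hdivk]
      have hEpos : (0:ℝ) < Real.exp (β * (s - t0)) := Real.exp_pos _
      have key : (deriv V s + β * V s) * Real.exp (β * (s - t0))
          ≤ ϖ * Real.exp (k * (s - t0)) := by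
        have h2 : deriv V s + β * V s ≤ ϖ * Real.exp (-2 * α * (s - t0)) := by linarith
        calc (deriv V s + β * V s) * Real.exp (β * (s - t0))
            ≤ (ϖ * Real.exp (-2 * α * (s - t0))) * Real.exp (β * (s - t0)) := by
              exact mul_le_mul_of_nonneg_right h2 hEpos.le
          _ = ϖ * Real.exp (k * (s - t0)) := by
              rw [mul_assoc, ← Real.exp_add, hk]
              ring_nf
      nlinarith [key]
  have hFle : F t ≤ F t0 := hanti (Set.self_mem_Ici) ht ht
  have hFt0 : F t0 = V t0 - ϖ / k := by
    simp [hF]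
  set τ := t - t0 with hτ
  have hτ0 : 0 ≤ τ := by simp [hτ]; linarith
  have hEβ : (0:ℝ) < Real.exp (β * τ) := Real.exp_pos _
  have hmain : V t ≤ V t0 * Real.exp (-β * τ) +
      (ϖ / k) * (Real.exp (-2 * α * τ) - Real.exp (-β * τ)) := by
    have h1 : V t * Real.exp (β * τ) ≤ V t0 - ϖ / k + (ϖ / k) * Real.exp (k * τ) := by
      have := hFle
      rw [hFt0] at this
      simp only [hF] at this
      linarith
    have h2 : V t ≤ (V t0 - ϖ / k + (ϖ / k) * Real.exp (k * τ)) * Real.exp (-β * τ) := by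
      rw [← le_div_iff₀ hEβ] at h1
      calc V t ≤ (V t0 - ϖ / k + (ϖ / k) * Real.exp (k * τ)) / Real.exp (β * τ) := h1
        _ = (V t0 - ϖ / k + (ϖ / k) * Real.exp (k * τ)) * Real.exp (-β * τ) := by
            rw [div_eq_mul_inv, ← Real.exp_neg]; ring_nf
    have h3 : Real.exp (k * τ) * Real.exp (-β * τ) = Real.exp (-2 * α * τ) := by
      rw [← Real.exp_add]; congr 1; simp [hk]; ring
    calc V t ≤ (V t0 - ϖ / k + (ϖ / k) * Real.exp (k * τ)) * Real.exp (-β * τ) := h2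
      _ = V t0 * Real.exp (-β * τ) +
          (ϖ / k) * (Real.exp (k * τ) * Real.exp (-β * τ) - Real.exp (-β * τ)) := by ring
      _ = _ := by rw [h3]
  have hE2α : (0:ℝ) < Real.exp (-2 * α * τ) := Real.exp_pos _
  have hEmβ : (0:ℝ) < Real.exp (-β * τ) := Real.exp_pos _
  rcases lt_or_gt_of_ne hne with hlt | hgt
  · -- β < 2α : |k| = -(k), min = β
    have habs : |β - 2 * α| = 2 * α - β := by
      rw [abs_of_neg (by linarith)]; ring
    have hmin : min (2 * α) β = β := min_eq_right hlt.le
    rw [habs, hmin]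
    have hkneg : k < 0 := by simp [hk]; linarith
    have h4 : (ϖ / k) * (Real.exp (-2 * α * τ) - Real.exp (-β * τ))
        = (ϖ / (2 * α - β)) * (Real.exp (-β * τ) - Real.exp (-2 * α * τ)) := by
      have h4' : ϖ / k = -(ϖ / (2 * α - β)) := by rw [hk, ← div_neg, neg_sub]
      rw [h4']; ring
    have h5 : (ϖ / (2 * α - β)) * (Real.exp (-β * τ) - Real.exp (-2 * α * τ))
        ≤ (ϖ / (2 * α - β)) * Real.exp (-β * τ) := by
      apply mul_le_mul_of_nonneg_left (by linarith)
      exact div_nonneg hϖ (by linarith)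
    calc V t ≤ V t0 * Real.exp (-β * τ) +
          (ϖ / k) * (Real.exp (-2 * α * τ) - Real.exp (-β * τ)) := hmain
      _ = V t0 * Real.exp (-β * τ) +
          (ϖ / (2 * α - β)) * (Real.exp (-β * τ) - Real.exp (-2 * α * τ)) := by rw [h4]
      _ ≤ V t0 * Real.exp (-β * τ) + (ϖ / (2 * α - β)) * Real.exp (-β * τ) := by linarith
  · -- β > 2α : |k| = k, min = 2α
    have habs : |β - 2 * α| = k := by
      rw [abs_of_pos (by simp [hk]; linarith)]
    have hmin : min (2 * α) β = 2 * α := min_eq_left hgt.le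
    rw [habs, hmin]
    have hkpos : 0 < k := by simp [hk]; linarith
    have h5 : (ϖ / k) * (Real.exp (-2 * α * τ) - Real.exp (-β * τ))
        ≤ (ϖ / k) * Real.exp (-2 * α * τ) := by
      apply mul_le_mul_of_nonneg_left (by linarith)
      exact div_nonneg hϖ hkpos.le
    have hEeq : Real.exp (-(2 * α) * τ) = Real.exp (-2 * α * τ) := by ring_nf
    rw [hEeq]
    linarith [hmain]
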